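/- Let (Ω, P) be a finite probability space, let V be a finite set partitioned into nonempty disjoint blocks V_1,…,V_c, and let (X_i)_{i∈V} be random variables on Ω taking values in {−1, 1}. Then for every integer L ≥ 2 there exists an integer t with 0 ≤ t ≤ L−1 such that E_{j_1,…,j_t}E_{i_1,…,i_t}[ Σ_{j,j'∈[c]} E_{i∈V_j, i'∈V_{j'}} I(X_i; X_{i'} | X_{i_1},…,X_{i_t}) ] ≤ c²/L, where j_1,…,j_t are drawn independently and uniformly from [c], each i_s is drawn uniformly from V_{j_s}, i is uniform in V_j and i' is uniform in V_{j'}, and I denotes conditional mutual information measured in bits. (Lemma 4.1, blockwise correlation reduction by conditioning.) -/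

import Mathlib

open Finset
open scoped Classical

/-- Probability of an event `E` on a finite space with probability mass function `P`. -/
noncomputable def pr {Ω : Type*} [Fintype Ω] (P : Ω → ℝ) (E : Ω → Prop) : ℝ :=
  ∑ ω, if E ω then P ω else 0

/-- `-(p·log₂ p)`, the summand of Shannon entropy in bits (with the `0·log 0 = 0`
convention, since `Real.logb 2 0 = 0`). -/
noncomputable def entAux (p : ℝ) : ℝ := -(p * Real.logb 2 p)

/-- Conditional Shannon entropy in bits: `H(X | Z) = Σ_z P(Z = z) · H(X | Z = z)`. -/
noncomputable def condEnt {Ω α β : Type*} [Fintype Ω] (P : Ω → ℝ)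
    (X : Ω → α) (Z : Ω → β) : ℝ :=
  ∑ z ∈ Finset.univ.image Z,
    pr P (fun ω => Z ω = z) *
      ∑ x ∈ Finset.univ.image X,
        entAux (pr P (fun ω => X ω = x ∧ Z ω = z) / pr P (fun ω => Z ω = z))

/-- Conditional mutual information in bits: `I(X; Y | Z) = H(X | Z) - H(X | Y, Z)`. -/
noncomputable def condMI {Ω α β γ : Type*} [Fintype Ω] (P : Ω → ℝ)
    (X : Ω → α) (Y : Ω → β) (Z : Ω → γ) : ℝ :=
  condEnt P X Z - condEnt P X (fun ω => (Y ω, Z ω))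

section hlp
variable {Ω : Type*} [Fintype Ω] {P : Ω → ℝ}

lemma pr_nonneg (hP0 : ∀ ω, 0 ≤ P ω) (E : Ω → Prop) : 0 ≤ pr P E :=
  Finset.sum_nonneg fun ω _ => by split <;> simp [hP0 ω]

lemma pr_mono (hP0 : ∀ ω, 0 ≤ P ω) {E F : Ω → Prop} (h : ∀ ω, E ω → F ω) :
    pr P E ≤ pr P F := by
  refine Finset.sum_le_sum fun ω _ => ?_
  by_cases hE : E ω
  · simp [hE, h ω hE]
  · simp only [hE, if_false]
    split <;> simp [hP0 ω]

lemma entAux_zero : entAux 0 = 0 := by simp [entAux]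

lemma entAux_nonneg {p : ℝ} (h0 : 0 ≤ p) (h1 : p ≤ 1) : 0 ≤ entAux p := by
  have : Real.logb 2 p ≤ 0 := Real.logb_nonpos (by norm_num) h0 h1
  have := mul_nonpos_of_nonneg_of_nonpos h0 this
  simp only [entAux]; linarith

lemma entAux_add_le_one {a b : ℝ} (ha : 0 ≤ a) (hb : 0 ≤ b) (hab : a + b = 1) :
    entAux a + entAux b ≤ 1 := by
  have hb' : b = 1 - a := by linarith
  subst hb'
  have h := Real.binEntropy_le_log_two (p := a)
  rw [Real.binEntropy] at h
  have hlog2 : (0:ℝ) < Real.log 2 := Real.log_pos (by norm_num)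
  simp only [entAux, Real.logb]
  rw [Real.log_inv, Real.log_inv] at h
  have heq : -(a * (Real.log a / Real.log 2)) + -((1 - a) * (Real.log (1 - a) / Real.log 2))
      = (a * -Real.log a + (1 - a) * -Real.log (1 - a)) / Real.log 2 := by ring
  rw [heq, div_le_one hlog2]
  linarith

lemma pr_sum_image {β : Type*} [DecidableEq β] (hP1 : ∑ ω, P ω = 1) (Z : Ω → β) :
    ∑ z ∈ Finset.univ.image Z, pr P (fun ω => Z ω = z) = 1 := by
  rw [← hP1]
  unfold pr
  rw [Finset.sum_comm]
  refine Finset.sum_congr rfl fun ω _ => ?_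
  beta_reduce
  refine (Finset.sum_eq_single_of_mem (Z ω)
    (Finset.mem_image.2 ⟨ω, Finset.mem_univ ω, rfl⟩) ?_).trans (if_pos rfl)
  intro b _ hb
  exact if_neg fun h => hb h.symm

lemma pr_fiber_sum {α β : Type*} [DecidableEq α] (X : Ω → α) (Z : Ω → β) (z : β) :
    ∑ x ∈ Finset.univ.image X, pr P (fun ω => X ω = x ∧ Z ω = z)
      = pr P (fun ω => Z ω = z) := by
  unfold pr
  rw [Finset.sum_comm]
  refine Finset.sum_congr rfl fun ω _ => ?_
  beta_reduce
  by_cases hz : Z ω = z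
  · simp only [hz, and_true]
    refine (Finset.sum_eq_single_of_mem (X ω)
      (Finset.mem_image.2 ⟨ω, Finset.mem_univ ω, rfl⟩) ?_).trans (if_pos rfl)
    intro b _ hb
    exact if_neg fun h => hb h.symm
  · simp [hz]

lemma condEnt_nonneg {α β : Type*} (hP0 : ∀ ω, 0 ≤ P ω) (X : Ω → α) (Z : Ω → β) :
    0 ≤ condEnt P X Z := by
  refine Finset.sum_nonneg fun z _ => mul_nonneg (pr_nonneg hP0 _) ?_
  refine Finset.sum_nonneg fun x _ => entAux_nonneg
    (div_nonneg (pr_nonneg hP0 _) (pr_nonneg hP0 _)) ?_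
  exact div_le_one_of_le₀ (pr_mono hP0 fun ω h => h.2) (pr_nonneg hP0 _)

lemma condEnt_le_one {β : Type*} (hP0 : ∀ ω, 0 ≤ P ω) (hP1 : ∑ ω, P ω = 1)
    (X : Ω → ℤ) (hX : ∀ ω, X ω = 1 ∨ X ω = -1) (Z : Ω → β) :
    condEnt P X Z ≤ 1 := by
  have himg : Finset.univ.image X ⊆ ({1, -1} : Finset ℤ) := by
    intro x hx
    simp only [Finset.mem_image, Finset.mem_univ, true_and] at hx
    obtain ⟨ω, rfl⟩ := hx
    rcases hX ω with h | h <;> simp [h]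
  calc condEnt P X Z ≤ ∑ z ∈ Finset.univ.image Z, pr P (fun ω => Z ω = z) * 1 := by
        refine Finset.sum_le_sum fun z _ => ?_
        have hC : (fun (a b : ℤ) => Classical.propDecidable (a = b)) = Int.instDecidableEq :=
          Subsingleton.elim _ _
        set q := pr P (fun ω => Z ω = z) with hq
        have hq0 : 0 ≤ q := pr_nonneg hP0 _
        rcases eq_or_lt_of_le hq0 with hq0' | hq0'
        · have hS : ∀ x, pr P (fun ω => X ω = x ∧ Z ω = z) / q = 0 := by
            intro x
            have : pr P (fun ω => X ω = x ∧ Z ω = z) = 0 :=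
              le_antisymm (by rw [hq0']; exact pr_mono hP0 fun ω h => h.2)
                (pr_nonneg hP0 _)
            simp [this]
          simp only [hS, entAux_zero, Finset.sum_const_zero, mul_zero, mul_one]
          exact hq0
        · refine mul_le_mul_of_nonneg_left ?_ hq0
          set g : ℤ → ℝ := fun x =>
            if x ∈ Finset.univ.image X then pr P (fun ω => X ω = x ∧ Z ω = z) / q else 0
            with hg
          have hsub : ∀ x ∈ ({1, -1} : Finset ℤ), x ∉ Finset.univ.image X → g x = 0 := by
            intro x _ hx
            simp only [hg]
            rw [if_neg hx]
          have hmem : ∀ x ∈ Finset.univ.image X,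
              g x = pr P (fun ω => X ω = x ∧ Z ω = z) / q := by
            intro x hx
            simp only [hg]
            rw [if_pos hx]
          have hfib : ∑ x ∈ Finset.univ.image X, pr P (fun ω => X ω = x ∧ Z ω = z) = q :=
            pr_fiber_sum X Z z
          have hgsum : ∑ x ∈ ({1, -1} : Finset ℤ), g x = 1 := by
            rw [← Finset.sum_subset himg hsub, Finset.sum_congr rfl hmem,
              ← Finset.sum_div, hfib, div_self (ne_of_gt hq0')]
          have hgnn : ∀ x, 0 ≤ g x := by
            intro x
            simp only [hg]
            split
            · exact div_nonneg (pr_nonneg hP0 _) hq0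
            · exact le_rfl
          have hstep : ∑ x ∈ Finset.univ.image X,
              entAux (pr P (fun ω => X ω = x ∧ Z ω = z) / q)
                = ∑ x ∈ ({1, -1} : Finset ℤ), entAux (g x) := by
            rw [← Finset.sum_subset himg
              (fun x hx1 hx2 => by rw [hsub x hx1 hx2, entAux_zero])]
            exact Finset.sum_congr rfl fun x hx => by rw [hmem x hx]
          refine (show _ = ∑ x ∈ ({1, -1} : Finset ℤ), entAux (g x) by convert hstep).trans_le ?_
          rw [Finset.sum_pair (by norm_num : (1:ℤ) ≠ -1)]
          refine entAux_add_le_one (hgnn 1) (hgnn (-1)) ?_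
          rw [← Finset.sum_pair (by norm_num : (1:ℤ) ≠ -1)]
          exact hgsum
    _ = 1 := by
        simp only [mul_one]
        exact pr_sum_image hP1 Z

lemma condEnt_comp {α β γ : Type*} (X : Ω → α) (Z : Ω → β) (e : β → γ)
    (he : Function.Injective e) :
    condEnt P X (fun ω => e (Z ω)) = condEnt P X Z := by
  unfold condEnt
  have himg : Finset.univ.image (fun ω => e (Z ω)) = (Finset.univ.image Z).image e := by
    rw [Finset.image_image]
    rfl
  rw [himg, Finset.sum_image (fun z _ z' _ h => he h)]
  simp only [he.eq_iff]

end hlp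

lemma sum_piFinset_cons {V : Type*} [DecidableEq V] {n : ℕ} (T : Fin (n+1) → Finset V)
    (g : (Fin (n+1) → V) → ℝ) :
    ∑ v ∈ Fintype.piFinset T, g v
      = ∑ x ∈ T 0, ∑ v ∈ Fintype.piFinset (fun s => T s.succ), g (Fin.cons x v) := by
  rw [← Finset.sum_product']
  refine Finset.sum_nbij' (fun v => (v 0, Fin.tail v)) (fun p => Fin.cons p.1 p.2)
    ?_ ?_ ?_ ?_ ?_
  · intro v hv
    rw [Fintype.mem_piFinset] at hv
    refine Finset.mem_product.2 ⟨hv 0, ?_⟩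
    rw [Fintype.mem_piFinset]
    exact fun s => hv s.succ
  · intro p hp
    rw [Finset.mem_product] at hp
    rw [Fintype.mem_piFinset]
    intro s
    refine Fin.cases ?_ ?_ s
    · simpa using hp.1
    · intro s
      simpa using (Fintype.mem_piFinset.1 hp.2) s
  · intro v _
    exact Fin.cons_self_tail v
  · intro p _
    simp
  · intro v _
    simp [Fin.cons_self_tail]

section main
variable {Ω V : Type*} [Fintype Ω] [Fintype V] [DecidableEq V]

noncomputable def Phi (P : Ω → ℝ) (c : ℕ) (Vb : Fin c → Finset V) (X : V → Ω → ℤ)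
    (t : ℕ) : ℝ :=
  (1 / (c : ℝ) ^ t) *
    ∑ j : Fin t → Fin c,
      (∏ s, (1 : ℝ) / ((Vb (j s)).card : ℝ)) *
        ∑ v ∈ Fintype.piFinset (fun s => Vb (j s)),
          ∑ a : Fin c,
            (1 / ((Vb a).card : ℝ)) *
              ∑ i ∈ Vb a, condEnt P (X i) (fun ω => fun s : Fin t => X (v s) ω)

noncomputable def Gq (P : Ω → ℝ) (c : ℕ) (Vb : Fin c → Finset V) (X : V → Ω → ℤ)
    (t : ℕ) : ℝ :=
  (1 / (c : ℝ) ^ t) *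
    ∑ j : Fin t → Fin c,
      (∏ s, (1 : ℝ) / ((Vb (j s)).card : ℝ)) *
        ∑ v ∈ Fintype.piFinset (fun s => Vb (j s)),
          ∑ a : Fin c, ∑ b : Fin c,
            (1 / ((Vb a).card : ℝ)) * (1 / ((Vb b).card : ℝ)) *
              ∑ i ∈ Vb a, ∑ i' ∈ Vb b,
                condMI P (X i) (X i') (fun ω => fun s : Fin t => X (v s) ω)

variable {P : Ω → ℝ} {c : ℕ} {Vb : Fin c → Finset V} {X : V → Ω → ℤ}

lemma Phi_nonneg (hP0 : ∀ ω, 0 ≤ P ω) (t : ℕ) : 0 ≤ Phi P c Vb X t := by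
  refine mul_nonneg (by positivity) (Finset.sum_nonneg fun j _ => mul_nonneg
    (Finset.prod_nonneg fun s _ => by positivity) (Finset.sum_nonneg fun v _ =>
      Finset.sum_nonneg fun a _ => mul_nonneg (by positivity)
        (Finset.sum_nonneg fun i _ => condEnt_nonneg hP0 _ _)))

lemma Phi_le (hP0 : ∀ ω, 0 ≤ P ω) (hP1 : ∑ ω, P ω = 1)
    (hne : ∀ j, (Vb j).Nonempty) (hX : ∀ i ω, X i ω = 1 ∨ X i ω = -1)
    (hc : 0 < c) (t : ℕ) : Phi P c Vb X t ≤ c := by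
  have hcard : ∀ a : Fin c, ((Vb a).card : ℝ) ≠ 0 := fun a =>
    (Nat.cast_pos.2 (hne a).card_pos).ne'
  have h1 : ∀ j : Fin t → Fin c,
      (∑ v ∈ Fintype.piFinset (fun s => Vb (j s)),
        ∑ a : Fin c, (1 / ((Vb a).card : ℝ)) *
          ∑ i ∈ Vb a, condEnt P (X i) (fun ω => fun s : Fin t => X (v s) ω))
        ≤ (∏ s, ((Vb (j s)).card : ℝ)) * c := by
    intro j
    calc (∑ v ∈ Fintype.piFinset (fun s => Vb (j s)),
        ∑ a : Fin c, (1 / ((Vb a).card : ℝ)) *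
          ∑ i ∈ Vb a, condEnt P (X i) (fun ω => fun s : Fin t => X (v s) ω))
        ≤ ∑ _v ∈ Fintype.piFinset (fun s => Vb (j s)), (c : ℝ) := by
          refine Finset.sum_le_sum fun v _ => ?_
          calc (∑ a : Fin c, (1 / ((Vb a).card : ℝ)) *
              ∑ i ∈ Vb a, condEnt P (X i) (fun ω => fun s : Fin t => X (v s) ω))
              ≤ ∑ _a : Fin c, (1 : ℝ) := by
                refine Finset.sum_le_sum fun a _ => ?_
                have h2 : (∑ i ∈ Vb a,
                    condEnt P (X i) (fun ω => fun s : Fin t => X (v s) ω))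
                      ≤ ((Vb a).card : ℝ) := by
                  calc (∑ i ∈ Vb a,
                      condEnt P (X i) (fun ω => fun s : Fin t => X (v s) ω))
                      ≤ ∑ _i ∈ Vb a, (1:ℝ) :=
                        Finset.sum_le_sum fun i _ =>
                          condEnt_le_one hP0 hP1 (X i) (hX i) _
                    _ = ((Vb a).card : ℝ) := by
                        rw [Finset.sum_const, nsmul_eq_mul, mul_one]
                calc (1 / ((Vb a).card : ℝ)) *
                    ∑ i ∈ Vb a, condEnt P (X i) (fun ω => fun s : Fin t => X (v s) ω)
                    ≤ (1 / ((Vb a).card : ℝ)) * ((Vb a).card : ℝ) :=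
                      mul_le_mul_of_nonneg_left h2 (by positivity)
                  _ = 1 := one_div_mul_cancel (hcard a)
            _ = (c : ℝ) := by simp
      _ = (∏ s, ((Vb (j s)).card : ℝ)) * c := by
          rw [Finset.sum_const, nsmul_eq_mul, Fintype.card_piFinset]
          push_cast
          ring
  have h3 : Phi P c Vb X t ≤ (1 / (c : ℝ) ^ t) * ∑ _j : Fin t → Fin c, (c : ℝ) := by
    rw [Phi]
    refine mul_le_mul_of_nonneg_left (Finset.sum_le_sum fun j _ => ?_) (by positivity)
    calc (∏ s, (1 : ℝ) / ((Vb (j s)).card : ℝ)) *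
        ∑ v ∈ Fintype.piFinset (fun s => Vb (j s)),
          ∑ a : Fin c, (1 / ((Vb a).card : ℝ)) *
            ∑ i ∈ Vb a, condEnt P (X i) (fun ω => fun s : Fin t => X (v s) ω)
        ≤ (∏ s, (1 : ℝ) / ((Vb (j s)).card : ℝ)) *
            ((∏ s, ((Vb (j s)).card : ℝ)) * c) :=
          mul_le_mul_of_nonneg_left (h1 j)
            (Finset.prod_nonneg fun s _ => by positivity)
      _ = (∏ s, (1 : ℝ) / ((Vb (j s)).card : ℝ) * ((Vb (j s)).card : ℝ)) * c := by
          rw [Finset.prod_mul_distrib]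
          ring
      _ = (c : ℝ) := by
          rw [Finset.prod_congr rfl fun s _ => one_div_mul_cancel (hcard (j s))]
          simp
  refine h3.trans ?_
  rw [Finset.sum_const, nsmul_eq_mul]
  have hcc : ((Fintype.card (Fin t → Fin c) : ℝ)) = (c : ℝ) ^ t := by
    simp [Fintype.card_fun]
  rw [Finset.card_univ, hcc]
  have hct : ((c : ℝ)) ^ t ≠ 0 := by positivity
  field_simp
  exact le_rfl

lemma Gq_split (t : ℕ) :
    Gq P c Vb X t =
      ((1 / (c : ℝ) ^ t) *
        ∑ j : Fin t → Fin c,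
          (∏ s, (1 : ℝ) / ((Vb (j s)).card : ℝ)) *
            ∑ v ∈ Fintype.piFinset (fun s => Vb (j s)),
              ∑ a : Fin c, ∑ b : Fin c,
                (1 / ((Vb a).card : ℝ)) * (1 / ((Vb b).card : ℝ)) *
                  ∑ i ∈ Vb a, ∑ _i' ∈ Vb b,
                    condEnt P (X i) (fun ω => fun s : Fin t => X (v s) ω))
      - ((1 / (c : ℝ) ^ t) *
        ∑ j : Fin t → Fin c,
          (∏ s, (1 : ℝ) / ((Vb (j s)).card : ℝ)) *
            ∑ v ∈ Fintype.piFinset (fun s => Vb (j s)),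
              ∑ a : Fin c, ∑ b : Fin c,
                (1 / ((Vb a).card : ℝ)) * (1 / ((Vb b).card : ℝ)) *
                  ∑ i ∈ Vb a, ∑ i' ∈ Vb b,
                    condEnt P (X i)
                      (fun ω => (X i' ω, fun s : Fin t => X (v s) ω))) := by
  rw [Gq]
  simp only [condMI, Finset.sum_sub_distrib, mul_sub]

lemma partA (hne : ∀ j, (Vb j).Nonempty) (t : ℕ) :
    ((1 / (c : ℝ) ^ t) *
      ∑ j : Fin t → Fin c,
        (∏ s, (1 : ℝ) / ((Vb (j s)).card : ℝ)) *
          ∑ v ∈ Fintype.piFinset (fun s => Vb (j s)),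
            ∑ a : Fin c, ∑ b : Fin c,
              (1 / ((Vb a).card : ℝ)) * (1 / ((Vb b).card : ℝ)) *
                ∑ i ∈ Vb a, ∑ _i' ∈ Vb b,
                  condEnt P (X i) (fun ω => fun s : Fin t => X (v s) ω))
      = (c : ℝ) * Phi P c Vb X t := by
  have hcard : ∀ a : Fin c, ((Vb a).card : ℝ) ≠ 0 := fun a =>
    (Nat.cast_pos.2 (hne a).card_pos).ne'
  have hin : ∀ (v : Fin t → V),
      (∑ a : Fin c, ∑ b : Fin c,
        (1 / ((Vb a).card : ℝ)) * (1 / ((Vb b).card : ℝ)) *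
          ∑ i ∈ Vb a, ∑ _i' ∈ Vb b,
            condEnt P (X i) (fun ω => fun s : Fin t => X (v s) ω))
      = (c : ℝ) * ∑ a : Fin c, (1 / ((Vb a).card : ℝ)) *
          ∑ i ∈ Vb a, condEnt P (X i) (fun ω => fun s : Fin t => X (v s) ω) := by
    intro v
    have h2 : ∀ a b : Fin c,
        (1 / ((Vb a).card : ℝ)) * (1 / ((Vb b).card : ℝ)) *
          ∑ i ∈ Vb a, ∑ _i' ∈ Vb b,
            condEnt P (X i) (fun ω => fun s : Fin t => X (v s) ω)
        = (1 / ((Vb a).card : ℝ)) *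
            ∑ i ∈ Vb a, condEnt P (X i) (fun ω => fun s : Fin t => X (v s) ω) := by
      intro a b
      have h3 : (∑ i ∈ Vb a, ∑ _i' ∈ Vb b,
          condEnt P (X i) (fun ω => fun s : Fin t => X (v s) ω))
          = ((Vb b).card : ℝ) *
              ∑ i ∈ Vb a, condEnt P (X i) (fun ω => fun s : Fin t => X (v s) ω) := by
        rw [Finset.mul_sum]
        refine Finset.sum_congr rfl fun i _ => ?_
        rw [Finset.sum_const, nsmul_eq_mul]
      rw [h3]
      have hb1 : (1 / ((Vb b).card : ℝ)) * ((Vb b).card : ℝ) = 1 :=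
        one_div_mul_cancel (hcard b)
      calc (1 / ((Vb a).card : ℝ)) * (1 / ((Vb b).card : ℝ)) *
          (((Vb b).card : ℝ) *
            ∑ i ∈ Vb a, condEnt P (X i) (fun ω => fun s : Fin t => X (v s) ω))
          = (1 / ((Vb a).card : ℝ)) *
              (∑ i ∈ Vb a, condEnt P (X i) (fun ω => fun s : Fin t => X (v s) ω)) *
              ((1 / ((Vb b).card : ℝ)) * ((Vb b).card : ℝ)) := by ring
        _ = _ := by rw [hb1, mul_one]
    rw [Finset.sum_congr rfl fun a _ => Finset.sum_congr rfl fun b _ => h2 a b]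
    rw [Finset.sum_congr rfl fun a (_ : a ∈ Finset.univ) =>
      (Finset.sum_const _).trans (nsmul_eq_mul _ _)]
    rw [← Finset.mul_sum]
    simp
  calc ((1 / (c : ℝ) ^ t) *
      ∑ j : Fin t → Fin c,
        (∏ s, (1 : ℝ) / ((Vb (j s)).card : ℝ)) *
          ∑ v ∈ Fintype.piFinset (fun s => Vb (j s)),
            ∑ a : Fin c, ∑ b : Fin c,
              (1 / ((Vb a).card : ℝ)) * (1 / ((Vb b).card : ℝ)) *
                ∑ i ∈ Vb a, ∑ _i' ∈ Vb b,
                  condEnt P (X i) (fun ω => fun s : Fin t => X (v s) ω))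
      = (1 / (c : ℝ) ^ t) *
        ∑ j : Fin t → Fin c, (c : ℝ) *
          ((∏ s, (1 : ℝ) / ((Vb (j s)).card : ℝ)) *
            ∑ v ∈ Fintype.piFinset (fun s => Vb (j s)),
              ∑ a : Fin c, (1 / ((Vb a).card : ℝ)) *
                ∑ i ∈ Vb a, condEnt P (X i) (fun ω => fun s : Fin t => X (v s) ω)) := by
        refine congrArg _ (Finset.sum_congr rfl fun j _ => ?_)
        rw [Finset.sum_congr rfl fun v _ => hin v, ← Finset.mul_sum]
        ring
    _ = (c : ℝ) * Phi P c Vb X t := by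
        rw [← Finset.mul_sum, Phi]
        ring

lemma partB1 (t : ℕ) :
    ((1 / (c : ℝ) ^ t) *
      ∑ j : Fin t → Fin c,
        (∏ s, (1 : ℝ) / ((Vb (j s)).card : ℝ)) *
          ∑ v ∈ Fintype.piFinset (fun s => Vb (j s)),
            ∑ a : Fin c, ∑ b : Fin c,
              (1 / ((Vb a).card : ℝ)) * (1 / ((Vb b).card : ℝ)) *
                ∑ i ∈ Vb a, ∑ i' ∈ Vb b,
                  condEnt P (X i)
                    (fun ω => (X i' ω, fun s : Fin t => X (v s) ω)))
    = (1 / (c : ℝ) ^ t) *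
      ∑ j : Fin t → Fin c, ∑ b : Fin c,
        (∏ s, (1 : ℝ) / ((Vb (j s)).card : ℝ)) * (1 / ((Vb b).card : ℝ)) *
          ∑ i' ∈ Vb b, ∑ v ∈ Fintype.piFinset (fun s => Vb (j s)),
            ∑ a : Fin c, (1 / ((Vb a).card : ℝ)) *
              ∑ i ∈ Vb a,
                condEnt P (X i)
                  (fun ω => (X i' ω, fun s : Fin t => X (v s) ω)) := by
  refine congrArg _ (Finset.sum_congr rfl fun j _ => ?_)
  have stepi : ∀ v : Fin t → V,
      (∑ a : Fin c, ∑ b : Fin c,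
        (1 / ((Vb a).card : ℝ)) * (1 / ((Vb b).card : ℝ)) *
          ∑ i ∈ Vb a, ∑ i' ∈ Vb b,
            condEnt P (X i) (fun ω => (X i' ω, fun s : Fin t => X (v s) ω)))
      = ∑ b : Fin c, (1 / ((Vb b).card : ℝ)) *
          ∑ i' ∈ Vb b, ∑ a : Fin c, (1 / ((Vb a).card : ℝ)) *
            ∑ i ∈ Vb a,
              condEnt P (X i) (fun ω => (X i' ω, fun s : Fin t => X (v s) ω)) := by
    intro v
    rw [Finset.sum_comm]
    refine Finset.sum_congr rfl fun b _ => ?_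
    simp only [Finset.mul_sum]
    rw [Finset.sum_congr rfl fun a (_ : a ∈ Finset.univ) =>
      Finset.sum_comm (s := Vb a) (t := Vb b)]
    rw [Finset.sum_comm (s := (Finset.univ : Finset (Fin c))) (t := Vb b)]
    refine Finset.sum_congr rfl fun i' _ => Finset.sum_congr rfl fun a _ =>
      Finset.sum_congr rfl fun i _ => by ring
  rw [Finset.sum_congr rfl fun v _ => stepi v]
  -- now: Pj * ∑ v, ∑ b, wb * W b v = ∑ b, Pj * wb * ∑ i', ∑ v, ...
  rw [Finset.sum_comm (s := Fintype.piFinset (fun s => Vb (j s)))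
    (t := (Finset.univ : Finset (Fin c)))]
  rw [Finset.mul_sum]
  refine Finset.sum_congr rfl fun b _ => ?_
  rw [← Finset.mul_sum]
  rw [Finset.sum_comm (s := Fintype.piFinset (fun s => Vb (j s))) (t := Vb b)]
  ring

lemma partB2 (hc : 0 < c) (t : ℕ) :
    (c : ℝ) * Phi P c Vb X (t+1)
    = (1 / (c : ℝ) ^ t) *
      ∑ j : Fin t → Fin c, ∑ b : Fin c,
        (∏ s, (1 : ℝ) / ((Vb (j s)).card : ℝ)) * (1 / ((Vb b).card : ℝ)) *
          ∑ i' ∈ Vb b, ∑ v ∈ Fintype.piFinset (fun s => Vb (j s)),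
            ∑ a : Fin c, (1 / ((Vb a).card : ℝ)) *
              ∑ i ∈ Vb a,
                condEnt P (X i)
                  (fun ω => (X i' ω, fun s : Fin t => X (v s) ω)) := by
  have hcR : ((c : ℝ)) ≠ 0 := Nat.cast_ne_zero.2 hc.ne'
  have hE : ∀ (i i' : V) (v : Fin t → V),
      condEnt P (X i) (fun ω => fun s : Fin (t+1) => X (Fin.cons (α := fun _ => V) i' v s) ω)
      = condEnt P (X i) (fun ω => (X i' ω, fun s : Fin t => X (v s) ω)) := by
    intro i i' v
    have h1 : (fun ω => fun s : Fin (t+1) => X (Fin.cons (α := fun _ => V) i' v s) ω)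
        = (fun ω => (Fin.consEquiv fun _ : Fin (t+1) => ℤ)
            ((fun ω' => (X i' ω', fun s : Fin t => X (v s) ω')) ω)) := by
      funext ω
      funext s
      refine Fin.cases ?_ (fun s => ?_) s <;> simp [Fin.consEquiv]
    rw [h1]
    exact condEnt_comp (X i) _ _ (Equiv.injective _)
  have hre : ∀ F : (Fin (t+1) → Fin c) → ℝ,
      (∑ j' : Fin (t+1) → Fin c, F j')
        = ∑ b : Fin c, ∑ j : Fin t → Fin c, F (Fin.cons b j) := by
    intro F
    calc (∑ j' : Fin (t+1) → Fin c, F j')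
        = ∑ p : Fin c × (Fin t → Fin c), F (Fin.cons p.1 p.2) :=
          (Fintype.sum_equiv (Fin.consEquiv fun _ => Fin c)
            (fun p => F (Fin.cons p.1 p.2)) F (fun p => rfl)).symm
      _ = ∑ b : Fin c, ∑ j : Fin t → Fin c, F (Fin.cons b j) :=
          Fintype.sum_prod_type (f := fun p => F (Fin.cons p.1 p.2))
  rw [Phi, hre]
  have hterm : ∀ (b : Fin c) (j : Fin t → Fin c),
      ((∏ s : Fin (t+1), (1 : ℝ) / ((Vb (Fin.cons (α := fun _ => Fin c) b j s)).card : ℝ)) *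
        ∑ v' ∈ Fintype.piFinset (fun s : Fin (t+1) => Vb (Fin.cons (α := fun _ => Fin c) b j s)),
          ∑ a : Fin c, (1 / ((Vb a).card : ℝ)) *
            ∑ i ∈ Vb a,
              condEnt P (X i) (fun ω => fun s : Fin (t+1) => X (v' s) ω))
      = ((1 / ((Vb b).card : ℝ)) * ∏ s, (1 : ℝ) / ((Vb (j s)).card : ℝ)) *
          ∑ i' ∈ Vb b, ∑ v ∈ Fintype.piFinset (fun s => Vb (j s)),
            ∑ a : Fin c, (1 / ((Vb a).card : ℝ)) *
              ∑ i ∈ Vb a,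
                condEnt P (X i)
                  (fun ω => (X i' ω, fun s : Fin t => X (v s) ω)) := by
    intro b j
    have hp : (fun s : Fin (t+1) => (1 : ℝ) / ((Vb (Fin.cons (α := fun _ => Fin c) b j s)).card : ℝ))
        = Fin.cons ((1 : ℝ) / ((Vb b).card : ℝ))
            (fun s : Fin t => (1 : ℝ) / ((Vb (j s)).card : ℝ)) := by
      funext s
      refine Fin.cases ?_ (fun s => ?_) s <;> simp
    rw [hp, Fin.prod_cons]
    rw [sum_piFinset_cons (fun s : Fin (t+1) => Vb (Fin.cons (α := fun _ => Fin c) b j s))]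
    simp only [Fin.cons_zero, Fin.cons_succ]
    refine congrArg _ (Finset.sum_congr rfl fun i' _ =>
      Finset.sum_congr rfl fun v _ => Finset.sum_congr rfl fun a _ =>
        congrArg _ (Finset.sum_congr rfl fun i _ => hE i i' v))
  rw [Finset.sum_congr rfl fun b (_ : b ∈ Finset.univ) =>
    Finset.sum_congr rfl fun j (_ : j ∈ Finset.univ) => hterm b j]
  rw [Finset.sum_comm]
  rw [← mul_assoc,
    show (c : ℝ) * (1 / (c : ℝ) ^ (t+1)) = 1 / (c : ℝ) ^ t by
      rw [pow_succ]; field_simp]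
  refine congrArg _ (Finset.sum_congr rfl fun j _ =>
    Finset.sum_congr rfl fun b _ => by ring)

lemma Gq_eq (hne : ∀ j, (Vb j).Nonempty) (hc : 0 < c) (t : ℕ) :
    Gq P c Vb X t = (c : ℝ) * Phi P c Vb X t - (c : ℝ) * Phi P c Vb X (t+1) := by
  rw [Gq_split, partA hne, partB1, ← partB2 hc]

end main


/-- Lemma 4.1 (blockwise correlation reduction by conditioning): for `{−1,1}`-valued
random variables `(X_i)_{i ∈ V}` on a finite probability space, with `V` partitioned into
nonempty blocks `V_1, …, V_c`, for every `L ≥ 2` there is a `t ≤ L - 1` such that,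
in expectation over `t` vertices `i_1, …, i_t` sampled by choosing uniform blocks
`j_1, …, j_t` and uniform vertices within them, the sum over block pairs `(j, j')` of the
average conditional mutual information `I(X_i; X_{i'} | X_{i_1}, …, X_{i_t})`
(`i` uniform in `V_j`, `i'` uniform in `V_{j'}`) is at most `c²/L`. -/
theorem blockwise_correlation_reduction {Ω V : Type*} [Fintype Ω] [Fintype V]
    [DecidableEq V]
    (P : Ω → ℝ) (hP0 : ∀ ω, 0 ≤ P ω) (hP1 : ∑ ω, P ω = 1)
    (c : ℕ) (Vb : Fin c → Finset V)
    (hne : ∀ j, (Vb j).Nonempty)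
    (hdisj : ∀ j j', j ≠ j' → Disjoint (Vb j) (Vb j'))
    (hcover : ∀ v : V, ∃ j, v ∈ Vb j)
    (X : V → Ω → ℤ) (hX : ∀ i ω, X i ω = 1 ∨ X i ω = -1)
    (L : ℕ) (hL : 2 ≤ L) :
    ∃ t ≤ L - 1,
      (1 / (c : ℝ) ^ t) *
        ∑ j : Fin t → Fin c,
          (∏ s, (1 : ℝ) / ((Vb (j s)).card : ℝ)) *
            ∑ v ∈ Fintype.piFinset (fun s => Vb (j s)),
              ∑ a : Fin c, ∑ b : Fin c,
                (1 / ((Vb a).card : ℝ)) * (1 / ((Vb b).card : ℝ)) *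
                  ∑ i ∈ Vb a, ∑ i' ∈ Vb b,
                    condMI P (X i) (X i') (fun ω => fun s : Fin t => X (v s) ω)
        ≤ (c : ℝ) ^ 2 / (L : ℝ) := by
  rcases Nat.eq_zero_or_pos c with hc | hc
  · subst hc
    refine ⟨0, by omega, ?_⟩
    simp
  · have hLpos : (0 : ℝ) < L := by exact_mod_cast Nat.lt_of_lt_of_le (by norm_num) hL
    have htel : ∑ t ∈ Finset.range L, Gq P c Vb X t
        = (c : ℝ) * Phi P c Vb X 0 - (c : ℝ) * Phi P c Vb X L := by
      calc ∑ t ∈ Finset.range L, Gq P c Vb X t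
          = ∑ t ∈ Finset.range L,
              ((fun u => (c : ℝ) * Phi P c Vb X u) t
                - (fun u => (c : ℝ) * Phi P c Vb X u) (t+1)) :=
            Finset.sum_congr rfl fun t _ => Gq_eq hne hc t
        _ = _ := Finset.sum_range_sub' _ L
    have hbound : ∑ t ∈ Finset.range L, Gq P c Vb X t ≤ (c : ℝ) ^ 2 := by
      rw [htel]
      have h1 := Phi_le hP0 hP1 hne hX hc 0
      have h2 := Phi_nonneg (c := c) (Vb := Vb) (X := X) hP0 L
      have hc' : (0 : ℝ) ≤ c := Nat.cast_nonneg c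
      nlinarith
    have hex : ∃ t ∈ Finset.range L, Gq P c Vb X t ≤ (c : ℝ) ^ 2 / L := by
      by_contra h
      push_neg at h
      have hlt : ∑ t ∈ Finset.range L, ((c : ℝ) ^ 2 / L)
          < ∑ t ∈ Finset.range L, Gq P c Vb X t :=
        Finset.sum_lt_sum_of_nonempty ⟨0, Finset.mem_range.2 (by omega)⟩ h
      rw [Finset.sum_const, Finset.card_range, nsmul_eq_mul] at hlt
      rw [mul_div_cancel₀ _ (ne_of_gt hLpos)] at hlt
      linarith
    obtain ⟨t, ht, hle⟩ := hex
    exact ⟨t, by have := Finset.mem_range.1 ht; omega, hle⟩
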